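/- arXiv:1907.06688 — 2 statements merged into one kernel-verified Lean document; each statement's English description precedes it below -/
import Mathlib

section
/- If A is an m×n matrix over a field, then the branch-depth of A is at most its dual tree-depth: bd(A) ≤ td_D(A). -/
/-! Infrastructure: rooted trees, depth-decompositions and branch-depth of matroids,
following the definitions of Kardoš, Král', Liebenau, Mach and of the paper
"Optimal matrix tree-depth and a row-invariant parameterized algorithm for
integer programming". -/

/-- A rooted tree on a (nonempty) finite vertex type `V`, given by its root and its
parent function: the parent of the root is the root itself, and from any vertex the
root is reached by iterating the parent function. -/
structure RTree (V : Type) [Fintype V] [DecidableEq V] where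
  root : V
  parent : V → V
  parent_root : parent root = root
  reach : ∀ v : V, ∃ n : ℕ, parent^[n] v = root

namespace RTree

variable {V : Type} [Fintype V] [DecidableEq V]

/-- A vertex is a leaf if it has no children. -/
def IsLeaf (T : RTree V) (v : V) : Prop :=
  ∀ u : V, T.parent u = v → u = v

/-- The non-root vertices on the path from `v` to the root of `T`; they are in bijective
correspondence with the edges of this path (each such vertex corresponds to the edge
joining it to its parent). -/
def pathEdges (T : RTree V) (v : V) : Set V :=
  {u | u ≠ T.root ∧ ∃ n : ℕ, T.parent^[n] v = u}

/-- The number of edges of the tree. -/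
def edgeCount (T : RTree V) : ℕ := Fintype.card V - 1

/-- The depth of a vertex: the number of edges on the path from the root to it. -/
noncomputable def depthV (T : RTree V) (v : V) : ℕ :=
  sInf {n : ℕ | T.parent^[n] v = T.root}

/-- The depth of the tree: the maximum number of edges on a path from the root to a leaf. -/
noncomputable def depth (T : RTree V) : ℕ :=
  Finset.univ.sup T.depthV

/-- The descendants of a vertex `u` (including `u` itself). -/
def desc (T : RTree V) (u : V) : Set V := {w | ∃ n : ℕ, T.parent^[n] w = u}

/-- The number of children of a vertex. -/
noncomputable def childCount (T : RTree V) (u : V) : ℕ :=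
  {w : V | T.parent w = u ∧ w ≠ u}.ncard

/-- A rooted tree is a rooted path if every vertex has at most one child. -/
def IsRootedPath (T : RTree V) : Prop := ∀ u : V, T.childCount u ≤ 1

/-- `a` is a strict ancestor of `v`. -/
def IsStrictAncestor (T : RTree V) (a v : V) : Prop :=
  a ≠ v ∧ ∃ n : ℕ, T.parent^[n] v = a

/-- A branch of `T` consists of a vertex `u`, exactly one child `u'` of `u` and all
descendants of `u'`; it is hence determined by the non-root vertex `u'` and denoted
here by `u'`.  Its root is `parent u'`, its vertex set is `{parent u'} ∪ desc u'`, and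
its edge number `‖S‖` is `(desc u').ncard`.  The branch determined by `u'` is primary
if its root has at least two children and every (strict) ancestor of its root has
exactly one child. -/
def IsPrimaryBranch (T : RTree V) (u' : V) : Prop :=
  u' ≠ T.root ∧ 2 ≤ T.childCount (T.parent u') ∧
    ∀ a : V, T.IsStrictAncestor a (T.parent u') → T.childCount a = 1

end RTree

/-- `(T, f)` is a depth-decomposition of the matroid on ground set `X` with rank
function `rk` and rank `r`: `f` maps elements of the matroid to leaves of `T`, the
number of edges of `T` equals the rank `r` of the matroid, and the rank of every
`X' ⊆ X` is at most the number of edges contained in the union of the paths in `T`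
from the root to the vertices `f x`, `x ∈ X'`. -/
def IsDepthDecompOn {X V : Type} [Fintype V] [DecidableEq V]
    (rk : Set X → ℕ) (r : ℕ) (T : RTree V) (f : X → V) : Prop :=
  (∀ x : X, T.IsLeaf (f x)) ∧ T.edgeCount = r ∧
    ∀ X' : Set X, rk X' ≤ (⋃ x ∈ X', T.pathEdges (f x)).ncard

/-- The branch-depth of the matroid on ground set `X` with rank function `rk` and
rank `r`: the smallest depth of a rooted tree forming a depth-decomposition. -/
noncomputable def branchDepth {X : Type} (rk : Set X → ℕ) (r : ℕ) : ℕ :=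
  sInf {d : ℕ | ∃ (nV : ℕ) (T : RTree (Fin (nV + 1))) (f : X → Fin (nV + 1)),
    IsDepthDecompOn rk r T f ∧ T.depth = d}

/-- The branch of `T` determined by the non-root vertex `u'` is at capacity: the rank
of the set `Ŝ` of matroid elements mapped by `f` to the leaves of the branch equals the
number `‖S‖` of edges of the branch plus the number of edges on the path from the root
of `T` to the root of the branch. -/
def AtCapacity {X V : Type} [Fintype V] [DecidableEq V]
    (rk : Set X → ℕ) (T : RTree V) (f : X → V) (u' : V) : Prop :=
  rk {x | f x ∈ T.desc u'} = (T.desc u').ncard + T.depthV (T.parent u')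

/-- The rank function of the vector matroid formed by the family of vectors `v`:
the rank of a subset is the dimension of its linear hull. -/
noncomputable def vecRk (F : Type) {W ι : Type} [Field F] [AddCommGroup W] [Module F W]
    (v : ι → W) (S : Set ι) : ℕ :=
  Module.finrank F (Submodule.span F (v '' S))

/-- `(T, f, g)` is an extended depth-decomposition of the vector matroid formed by the
family of vectors `v`: `(T, f)` is a depth-decomposition, the images under `g` of the
non-root vertices of `T` form a basis of the linear hull of the vectors, and every
vector `v x` lies in the linear hull of the `g`-image of the non-root vertices on the
path from `f x` to the root. -/
def IsExtDepthDecomp (F : Type) {W ι V : Type} [Field F] [AddCommGroup W] [Module F W]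
    [Fintype V] [DecidableEq V] (v : ι → W) (T : RTree V) (f : ι → V) (g : V → W) : Prop :=
  IsDepthDecompOn (vecRk F v) (vecRk F v Set.univ) T f ∧
  LinearIndependent F (fun u : {u : V // u ≠ T.root} => g u.val) ∧
  Submodule.span F (g '' {u : V | u ≠ T.root}) = Submodule.span F (Set.range v) ∧
  ∀ x : ι, v x ∈ Submodule.span F (g '' T.pathEdges (f x))

/-- The rank function of the vector matroid formed by the columns of a matrix `A`. -/
noncomputable def matRk {F : Type} [Field F] {m n : ℕ} (A : Matrix (Fin m) (Fin n) F)
    (S : Set (Fin n)) : ℕ :=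
  vecRk F (fun j => A.transpose j) S

/-- The branch-depth of a matrix `A`: the branch-depth of the vector matroid formed by
the columns of `A`. -/
noncomputable def matBranchDepth {F : Type} [Field F] {m n : ℕ}
    (A : Matrix (Fin m) (Fin n) F) : ℕ :=
  branchDepth (matRk A) (matRk A Set.univ)

/-- The dual graph of a matrix `A`: vertices are the rows of `A`, two distinct rows
being adjacent if some column of `A` has a non-zero entry in both of them. -/
def dualGraph {F : Type} [Field F] {m n : ℕ} (A : Matrix (Fin m) (Fin n) F) :
    SimpleGraph (Fin m) where
  Adj i i' := i ≠ i' ∧ ∃ j : Fin n, A i j ≠ 0 ∧ A i' j ≠ 0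
  symm := by
    constructor
    rintro i i' ⟨h1, j, h2, h3⟩
    exact ⟨h1.symm, j, h3, h2⟩
  loopless := ⟨fun i h => h.1 rfl⟩

/-- A rooted forest on a finite vertex type `V`, given by its parent function: the roots
are the fixed points of the parent function, and iterating the parent function from any
vertex reaches a root. -/
structure RForest (V : Type) [Fintype V] [DecidableEq V] where
  parent : V → V
  reach : ∀ v : V, ∃ n : ℕ, parent (parent^[n] v) = parent^[n] v

namespace RForest

variable {V : Type} [Fintype V] [DecidableEq V]

/-- The depth of a vertex: the number of edges on the path from the root of its tree. -/
noncomputable def depthV (Fo : RForest V) (v : V) : ℕ :=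
  sInf {n : ℕ | Fo.parent (Fo.parent^[n] v) = Fo.parent^[n] v}

/-- The height of a rooted forest: the maximum number of vertices on a path from a root
to a leaf. -/
noncomputable def height (Fo : RForest V) : ℕ :=
  Finset.univ.sup fun v => Fo.depthV v + 1

/-- The closure of the rooted forest `Fo` (obtained by adding edges from each vertex to
all its descendants) contains the graph `G` as a subgraph. -/
def ClosureContains (Fo : RForest V) (G : SimpleGraph V) : Prop :=
  ∀ u v : V, G.Adj u v → (∃ n : ℕ, Fo.parent^[n] v = u) ∨ (∃ n : ℕ, Fo.parent^[n] u = v)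

end RForest

/-- The tree-depth of a graph `G`: the minimum height of a rooted forest whose closure
contains `G` as a subgraph. -/
noncomputable def treeDepth {V : Type} [Fintype V] [DecidableEq V] (G : SimpleGraph V) : ℕ :=
  sInf {h : ℕ | ∃ Fo : RForest V, Fo.ClosureContains G ∧ Fo.height = h}

/-! ### Auxiliary development -/

namespace RForest

variable {V : Type} [Fintype V] [DecidableEq V] (Fo : RForest V)

lemma depthV_mem (v : V) :
    Fo.parent (Fo.parent^[Fo.depthV v] v) = Fo.parent^[Fo.depthV v] v :=
  Nat.sInf_mem (Fo.reach v)

lemma depthV_le {v : V} {n : ℕ} (h : Fo.parent (Fo.parent^[n] v) = Fo.parent^[n] v) :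
    Fo.depthV v ≤ n := Nat.sInf_le h

lemma iterate_stab {v : V} {n : ℕ} (h : Fo.depthV v ≤ n) :
    Fo.parent^[n] v = Fo.parent^[Fo.depthV v] v := by
  obtain ⟨k, rfl⟩ := Nat.exists_eq_add_of_le h
  rw [add_comm, Function.iterate_add_apply]
  exact Function.iterate_fixed (Fo.depthV_mem v) k

lemma fixed_of_periodic {v : V} {k : ℕ} (hk : k ≠ 0) (h : Fo.parent^[k] v = v) :
    Fo.parent v = v := by
  have hmul : ∀ M : ℕ, Fo.parent^[M * k] v = v := by
    intro M
    induction M with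
    | zero => simp
    | succ M ih => rw [Nat.succ_mul, Function.iterate_add_apply, h, ih]
  have h1 : Fo.depthV v ≤ Fo.depthV v * k := Nat.le_mul_of_pos_right _ (Nat.pos_of_ne_zero hk)
  have h2 : Fo.parent^[Fo.depthV v] v = v :=
    (Fo.iterate_stab h1).symm.trans (hmul (Fo.depthV v))
  have := Fo.depthV_mem v
  rwa [h2] at this

/-- `a` is an ancestor of `b` (possibly equal). -/
def Anc (a b : V) : Prop := ∃ k : ℕ, Fo.parent^[k] b = a

lemma anc_refl (v : V) : Fo.Anc v v := ⟨0, rfl⟩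

lemma anc_norm {a b : V} (h : Fo.Anc a b) (hne : a ≠ b) :
    ∃ k : ℕ, 1 ≤ k ∧ k ≤ Fo.depthV b ∧ Fo.parent^[k] b = a := by
  obtain ⟨k, hk⟩ := h
  have hk0 : k ≠ 0 := by rintro rfl; exact hne hk.symm
  by_cases hle : k ≤ Fo.depthV b
  · exact ⟨k, Nat.one_le_iff_ne_zero.2 hk0, hle, hk⟩
  · push_neg at hle
    have hd0 : Fo.depthV b ≠ 0 := by
      rintro hd
      have : Fo.parent b = b := by
        have := Fo.depthV_mem b; rwa [hd] at this
      rw [Function.iterate_fixed this k] at hk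
      exact hne hk.symm
    refine ⟨Fo.depthV b, Nat.one_le_iff_ne_zero.2 hd0, le_rfl, ?_⟩
    rw [← hk, Fo.iterate_stab hle.le]

lemma depthV_iterate_le (v : V) (k : ℕ) :
    Fo.depthV (Fo.parent^[k] v) ≤ Fo.depthV v - k := by
  apply Fo.depthV_le
  rw [← Function.iterate_add_apply]
  have h1 : Fo.depthV v ≤ Fo.depthV v - k + k := by omega
  rw [Fo.iterate_stab h1]
  exact Fo.depthV_mem v

lemma depthV_lt_of_anc {a b : V} (h : Fo.Anc a b) (hne : a ≠ b) :
    Fo.depthV a < Fo.depthV b := by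
  obtain ⟨k, hk1, hk2, hk⟩ := Fo.anc_norm h hne
  have := Fo.depthV_iterate_le b k
  rw [hk] at this
  omega

lemma anc_total {a b v : V} (ha : Fo.Anc a v) (hb : Fo.Anc b v) :
    Fo.Anc a b ∨ Fo.Anc b a := by
  obtain ⟨k, hk⟩ := ha
  obtain ⟨l, hl⟩ := hb
  rcases le_total k l with h | h
  · right
    obtain ⟨d, rfl⟩ := Nat.exists_eq_add_of_le h
    exact ⟨d, by rw [← hk, ← hl, add_comm, Function.iterate_add_apply]⟩
  · left
    obtain ⟨d, rfl⟩ := Nat.exists_eq_add_of_le h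
    exact ⟨d, by rw [← hk, ← hl, add_comm, Function.iterate_add_apply]⟩

end RForest
namespace RTree

variable {V : Type} [Fintype V] [DecidableEq V] (T : RTree V)

lemma depthV_mem' (v : V) : T.parent^[T.depthV v] v = T.root :=
  Nat.sInf_mem (T.reach v)

lemma depthV_le' {v : V} {n : ℕ} (h : T.parent^[n] v = T.root) : T.depthV v ≤ n :=
  Nat.sInf_le h

lemma depthV_root : T.depthV T.root = 0 :=
  Nat.le_zero.1 (T.depthV_le' (by simp))

lemma depthV_le_depth (v : V) : T.depthV v ≤ T.depth :=
  Finset.le_sup (Finset.mem_univ v)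

lemma depthV_parent_le (v : V) : T.depthV v ≤ T.depthV (T.parent v) + 1 := by
  apply T.depthV_le'
  rw [Function.iterate_succ_apply]
  exact T.depthV_mem' (T.parent v)

lemma depthV_lt_of_parent {w u : V} (hp : T.parent w = u) (hne : w ≠ u) :
    T.depthV u < T.depthV w := by
  have hw0 : w ≠ T.root := by
    rintro rfl; exact hne ((hp.symm.trans T.parent_root).symm)
  have h1 : T.depthV w ≠ 0 := by
    intro h
    have := T.depthV_mem' w; rw [h] at this; exact hw0 this
  have h2 : T.parent^[T.depthV w - 1] u = T.root := by
    have := T.depthV_mem' w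
    rw [show T.depthV w = (T.depthV w - 1) + 1 by omega, Function.iterate_succ_apply, hp] at this
    exact this
  have := T.depthV_le' h2
  omega

/-- `a` is an ancestor of `b` in the rooted tree. -/
def AncT (a b : V) : Prop := ∃ k : ℕ, T.parent^[k] b = a

lemma ancT_trans {a b c : V} (h1 : T.AncT a b) (h2 : T.AncT b c) : T.AncT a c := by
  obtain ⟨k, hk⟩ := h1
  obtain ⟨l, hl⟩ := h2
  exact ⟨k + l, by rw [Function.iterate_add_apply, hl, hk]⟩

lemma exists_leaf_desc (v : V) : ∃ u : V, T.IsLeaf u ∧ T.AncT v u := by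
  classical
  obtain ⟨u, hu, hmax⟩ := Set.Finite.exists_maximalFor T.depthV {u : V | T.AncT v u}
    (Set.toFinite _) ⟨v, T.ancT_trans ⟨0, rfl⟩ ⟨0, rfl⟩⟩
  refine ⟨u, ?_, hu⟩
  intro w hw
  by_contra hne
  have hwD : w ∈ {u : V | T.AncT v u} := by
    obtain ⟨k, hk⟩ := hu
    exact T.ancT_trans ⟨k, hk⟩ ⟨1, by simpa using hw⟩
  have hlt : T.depthV u < T.depthV w := T.depthV_lt_of_parent hw hne
  rcases le_or_gt (T.depthV u) (T.depthV w) with h | h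
  · exact absurd (hmax hwD h) (by omega)
  · omega

/-- A chosen leaf among the descendants of `v`. -/
noncomputable def leafDesc (v : V) : V := (T.exists_leaf_desc v).choose

lemma leafDesc_isLeaf (v : V) : T.IsLeaf (T.leafDesc v) :=
  (T.exists_leaf_desc v).choose_spec.1

lemma leafDesc_anc (v : V) : T.AncT v (T.leafDesc v) :=
  (T.exists_leaf_desc v).choose_spec.2

lemma mem_pathEdges_of_anc {a v : V} (ha : a ≠ T.root) (h : T.AncT a v) :
    a ∈ T.pathEdges v := ⟨ha, h⟩

end RTree
section Build

variable {V : Type} [Fintype V] [DecidableEq V]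

open Classical in
/-- The nearest strict ancestor of `i` lying in `R`, if any. -/
noncomputable def RForest.next (Fo : RForest V) (R : Finset V) (i : V) : Option {x // x ∈ R} :=
  if h : {k : ℕ | 1 ≤ k ∧ k ≤ Fo.depthV i ∧ Fo.parent^[k] i ∈ R}.Nonempty then
    some ⟨Fo.parent^[sInf {k : ℕ | 1 ≤ k ∧ k ≤ Fo.depthV i ∧ Fo.parent^[k] i ∈ R}] i,
      (Nat.sInf_mem h).2.2⟩
  else none

lemma RForest.next_spec (Fo : RForest V) (R : Finset V) (i : V) {j : {x // x ∈ R}}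
    (h : Fo.next R i = some j) :
    ∃ k0 : ℕ, 1 ≤ k0 ∧ k0 ≤ Fo.depthV i ∧ Fo.parent^[k0] i = j.val ∧
      ∀ k : ℕ, 1 ≤ k → k ≤ Fo.depthV i → Fo.parent^[k] i ∈ R → k0 ≤ k := by
  classical
  rw [RForest.next] at h
  split_ifs at h with hne
  have hmem := Nat.sInf_mem hne
  refine ⟨sInf {k : ℕ | 1 ≤ k ∧ k ≤ Fo.depthV i ∧ Fo.parent^[k] i ∈ R},
    hmem.1, hmem.2.1, ?_, fun k h1 h2 h3 => Nat.sInf_le ⟨h1, h2, h3⟩⟩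
  have := congrArg (fun o => Option.map Subtype.val o) h
  simpa using this

lemma RForest.next_none (Fo : RForest V) (R : Finset V) (i : V)
    (h : Fo.next R i = none) :
    ∀ k : ℕ, 1 ≤ k → k ≤ Fo.depthV i → Fo.parent^[k] i ∉ R := by
  classical
  rw [RForest.next] at h
  split_ifs at h with hne
  intro k h1 h2 h3
  exact hne ⟨k, h1, h2, h3⟩

lemma RForest.next_depth (Fo : RForest V) (R : Finset V) (i : V) {j : {x // x ∈ R}}
    (h : Fo.next R i = some j) : Fo.depthV j.val + 1 ≤ Fo.depthV i := by
  obtain ⟨k0, hk1, hk2, hk, -⟩ := Fo.next_spec R i h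
  have := Fo.depthV_iterate_le i k0
  rw [hk] at this
  omega

/-- The parent function of the tree built from a forest restricted to `R`. -/
noncomputable def RForest.tparent (Fo : RForest V) (R : Finset V) :
    Option {x // x ∈ R} → Option {x // x ∈ R}
  | none => none
  | some i => Fo.next R i.val

lemma RForest.tparent_none (Fo : RForest V) (R : Finset V) :
    Fo.tparent R none = none := rfl

lemma RForest.tparent_some (Fo : RForest V) (R : Finset V) (i : {x // x ∈ R}) :
    Fo.tparent R (some i) = Fo.next R i.val := rfl

/-- The rooted tree obtained from the restriction of the forest `Fo` to `R`,
with a new root attached. -/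
noncomputable def RForest.toRTree (Fo : RForest V) (R : Finset V) :
    RTree (Option {x // x ∈ R}) where
  root := none
  parent := Fo.tparent R
  parent_root := rfl
  reach := by
    have key : ∀ d : ℕ, ∀ i : {x // x ∈ R}, Fo.depthV i.val ≤ d →
        ∃ n : ℕ, (Fo.tparent R)^[n] (some i) = none := by
      intro d
      induction d with
      | zero =>
        intro i hd
        refine ⟨1, ?_⟩
        rw [Function.iterate_one, RForest.tparent_some]
        rcases h : Fo.next R i.val with _ | j
        · rfl
        · have := Fo.next_depth R i.val h
          omega
      | succ d ih =>
        intro i hd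
        rcases h : Fo.next R i.val with _ | j
        · exact ⟨1, by rw [Function.iterate_one, RForest.tparent_some, h]⟩
        · have hd2 : Fo.depthV j.val ≤ d := by
            have := Fo.next_depth R i.val h
            omega
          obtain ⟨n, hn⟩ := ih j hd2
          exact ⟨n + 1, by rw [Function.iterate_succ_apply, RForest.tparent_some, h, hn]⟩
    intro v
    rcases v with _ | i
    · exact ⟨0, rfl⟩
    · exact key (Fo.depthV i.val) i le_rfl

variable (Fo : RForest V) (R : Finset V)

lemma RForest.toRTree_root : (Fo.toRTree R).root = none := rfl

lemma RForest.toRTree_parent_some (i : {x // x ∈ R}) :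
    (Fo.toRTree R).parent (some i) = Fo.next R i.val := rfl

/-- Lifting ancestry from the forest to the built tree. -/
lemma RForest.toRTree_anc {i i' : V} (hi : i ∈ R) (hi' : i' ∈ R)
    (h : Fo.Anc i i') : (Fo.toRTree R).AncT (some ⟨i, hi⟩) (some ⟨i', hi'⟩) := by
  have key : ∀ d : ℕ, ∀ i' : V, ∀ hi' : i' ∈ R, Fo.depthV i' ≤ d → Fo.Anc i i' →
      (Fo.toRTree R).AncT (some ⟨i, hi⟩) (some ⟨i', hi'⟩) := by
    intro d
    induction d with
    | zero =>
      intro i' hi' hd h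
      rcases eq_or_ne i i' with rfl | hne
      · exact ⟨0, rfl⟩
      · obtain ⟨k, hk1, hk2, -⟩ := Fo.anc_norm h hne
        omega
    | succ d ih =>
      intro i' hi' hd h
      rcases eq_or_ne i i' with rfl | hne
      · exact ⟨0, rfl⟩
      · obtain ⟨k, hk1, hk2, hk⟩ := Fo.anc_norm h hne
        rcases hnx : Fo.next R i' with _ | j
        · exact absurd (hk ▸ hi) (Fo.next_none R i' hnx k hk1 hk2)
        · obtain ⟨k0, hk01, hk02, hk0, hk0min⟩ := Fo.next_spec R i' hnx
          have hk0le : k0 ≤ k := hk0min k hk1 hk2 (hk ▸ hi)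
          have hanc2 : Fo.Anc i j.val := by
            refine ⟨k - k0, ?_⟩
            rw [← hk0, ← Function.iterate_add_apply, show k - k0 + k0 = k by omega, hk]
          have hd2 : Fo.depthV j.val ≤ d := by
            have := Fo.next_depth R i' hnx
            omega
          obtain ⟨n, hn⟩ := ih j.val j.2 hd2 hanc2
          refine ⟨n + 1, ?_⟩
          rw [Function.iterate_add_apply, Function.iterate_one]
          show (Fo.toRTree R).parent^[n] ((Fo.toRTree R).parent (some ⟨i', hi'⟩)) = _
          rw [RForest.toRTree_parent_some, hnx]
          convert hn using 3
  exact key (Fo.depthV i') i' hi' le_rfl h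

/-- Depth bound for the built tree. -/
lemma RForest.toRTree_depthV_le (i : {x // x ∈ R}) :
    (Fo.toRTree R).depthV (some i) ≤ Fo.depthV i.val + 1 := by
  have key : ∀ d : ℕ, ∀ i : {x // x ∈ R}, Fo.depthV i.val ≤ d →
      (Fo.toRTree R).depthV (some i) ≤ Fo.depthV i.val + 1 := by
    intro d
    induction d with
    | zero =>
      intro i hd
      rcases h : Fo.next R i.val with _ | j
      · have := (Fo.toRTree R).depthV_le' (n := 1) (v := some i)
          (by rw [Function.iterate_one, RForest.toRTree_parent_some, h]; rfl)
        omega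
      · have := Fo.next_depth R i.val h
        omega
    | succ d ih =>
      intro i hd
      rcases h : Fo.next R i.val with _ | j
      · have := (Fo.toRTree R).depthV_le' (n := 1) (v := some i)
          (by rw [Function.iterate_one, RForest.toRTree_parent_some, h]; rfl)
        omega
      · have hd2 : Fo.depthV j.val ≤ d := by
          have := Fo.next_depth R i.val h
          omega
        have hd2' := Fo.next_depth R i.val h
        have h1 := ih j hd2
        have h2 := (Fo.toRTree R).depthV_parent_le (some i)
        rw [RForest.toRTree_parent_some, h] at h2
        omega
  exact key (Fo.depthV i.val) i le_rfl

lemma RForest.toRTree_depth_le : (Fo.toRTree R).depth ≤ Fo.height := by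
  rw [RTree.depth]
  apply Finset.sup_le
  intro v _
  rcases v with _ | i
  · rw [show (none : Option {x // x ∈ R}) = (Fo.toRTree R).root from rfl,
      RTree.depthV_root]
    exact Nat.zero_le _
  · calc (Fo.toRTree R).depthV (some i) ≤ Fo.depthV i.val + 1 :=
          Fo.toRTree_depthV_le R i
      _ ≤ Fo.height := by
          rw [RForest.height]
          exact Finset.le_sup (f := fun v => Fo.depthV v + 1) (Finset.mem_univ i.val)

end Build
section Relabel

variable {V W : Type} [Fintype V] [DecidableEq V] [Fintype W] [DecidableEq W]

/-- Relabel a rooted tree along an equivalence of vertex types. -/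
def RTree.relabel (T : RTree V) (e : V ≃ W) : RTree W where
  root := e T.root
  parent := fun w => e (T.parent (e.symm w))
  parent_root := by simp [T.parent_root]
  reach := by
    intro w
    obtain ⟨n, hn⟩ := T.reach (e.symm w)
    refine ⟨n, ?_⟩
    have key : ∀ m : ℕ, ∀ v : V,
        (fun w => e (T.parent (e.symm w)))^[m] (e v) = e (T.parent^[m] v) := by
      intro m
      induction m with
      | zero => intro v; simp
      | succ m ih =>
        intro v
        rw [Function.iterate_succ_apply, Function.iterate_succ_apply]
        simpa using ih (T.parent v)
    have := key n (e.symm w)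
    simp only [Equiv.apply_symm_apply] at this
    rw [this, hn]

variable (T : RTree V) (e : V ≃ W)

lemma RTree.relabel_iterate (n : ℕ) (v : V) :
    (T.relabel e).parent^[n] (e v) = e (T.parent^[n] v) := by
  induction n with
  | zero => simp
  | succ n ih =>
    rw [Function.iterate_succ_apply', Function.iterate_succ_apply', ih]
    show e (T.parent (e.symm (e _))) = _
    simp

lemma RTree.relabel_isLeaf {v : V} (h : T.IsLeaf v) : (T.relabel e).IsLeaf (e v) := by
  intro u hu
  have hu' : e (T.parent (e.symm u)) = e v := hu
  have h1 : T.parent (e.symm u) = v := e.injective hu'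
  have h2 := h _ h1
  rw [← h2]
  simp

lemma RTree.relabel_pathEdges (v : V) :
    (T.relabel e).pathEdges (e v) = e '' T.pathEdges v := by
  ext w
  constructor
  · rintro ⟨hw, n, hn⟩
    refine ⟨e.symm w, ⟨?_, n, ?_⟩, by simp⟩
    · intro h
      apply hw
      show w = e T.root
      rw [← h]; simp
    · rw [RTree.relabel_iterate] at hn
      have := congrArg e.symm hn
      simpa using this
  · rintro ⟨u, ⟨hu, n, hn⟩, rfl⟩
    refine ⟨?_, n, ?_⟩
    · intro h
      exact hu (e.injective h)
    · rw [RTree.relabel_iterate, hn]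

lemma RTree.relabel_depthV (v : V) :
    (T.relabel e).depthV (e v) = T.depthV v := by
  unfold RTree.depthV
  congr 1
  ext n
  simp only [Set.mem_setOf_eq]
  rw [RTree.relabel_iterate]
  show e (T.parent^[n] v) = e T.root ↔ _
  exact e.injective.eq_iff

lemma RTree.relabel_depth : (T.relabel e).depth = T.depth := by
  unfold RTree.depth
  conv_lhs => rw [← Finset.image_univ_equiv e, Finset.sup_image]
  exact Finset.sup_congr rfl fun v _ => T.relabel_depthV e v
section BranchDepthLe

lemma branchDepth_le_of_decomp {X V : Type} [Fintype V] [DecidableEq V]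
    (rk : Set X → ℕ) (r : ℕ) (T : RTree V) (f : X → V)
    (h : IsDepthDecompOn rk r T f) : branchDepth rk r ≤ T.depth := by
  obtain ⟨hleaf, hedge, hrank⟩ := h
  have hcard : Fintype.card V = r + 1 := by
    have h1 : 0 < Fintype.card V := Fintype.card_pos_iff.2 ⟨T.root⟩
    have h2 : Fintype.card V - 1 = r := hedge
    omega
  let e : V ≃ Fin (r + 1) := Fintype.equivFinOfCardEq hcard
  apply Nat.sInf_le
  refine ⟨r, T.relabel e, fun x => e (f x), ⟨?_, ?_, ?_⟩, T.relabel_depth e⟩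
  · intro x
    exact T.relabel_isLeaf e (hleaf x)
  · show Fintype.card (Fin (r + 1)) - 1 = r
    simp
  · intro X'
    have himg : (⋃ x ∈ X', (T.relabel e).pathEdges (e (f x)))
        = e '' (⋃ x ∈ X', T.pathEdges (f x)) := by
      rw [Set.image_iUnion₂]
      apply Set.iUnion₂_congr
      intro x _
      exact T.relabel_pathEdges e (f x)
    rw [himg, Set.ncard_image_of_injective _ e.injective]
    exact hrank X'

end BranchDepthLe
section RankBound

open Module

lemma rank_bound {F : Type} [Field F] {m n : ℕ} (A : Matrix (Fin m) (Fin n) F)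
    (R S' : Set (Fin m))
    (hspan : Submodule.span F ((fun i => A i) '' R) = Submodule.span F (Set.range (fun i => A i)))
    (X' : Set (Fin n)) (hsupp : ∀ j ∈ X', ∀ i ∈ R, A i j ≠ 0 → i ∈ S') :
    vecRk F (fun j => A.transpose j) X' ≤ S'.ncard := by
  classical
  haveI : Fintype ↥S' := S'.toFinite.fintype
  set p : Submodule F (Fin m → F) :=
    Submodule.span F ((fun j => A.transpose j) '' X') with hp_def
  let π : (Fin m → F) →ₗ[F] (↥S' → F) := LinearMap.funLeft F F Subtype.val
  let π' : p →ₗ[F] (↥S' → F) := π.comp p.subtype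
  have hker : LinearMap.ker π' = ⊥ := by
    rw [LinearMap.ker_eq_bot']
    rintro ⟨v, hv⟩ hπ
    have hvR : ∀ i ∈ R, v i = 0 := by
      intro i hi
      by_cases hiS : i ∈ S'
      · have h0 := congrFun hπ ⟨i, hiS⟩
        simpa [π', π, LinearMap.funLeft_apply] using h0
      · have hple : p ≤ LinearMap.ker (LinearMap.proj i : (Fin m → F) →ₗ[F] F) := by
          rw [hp_def, Submodule.span_le]
          rintro w ⟨j, hj, rfl⟩
          simp only [SetLike.mem_coe, LinearMap.mem_ker, LinearMap.proj_apply]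
          show A i j = 0
          by_contra hne
          exact hiS (hsupp j hj i hi hne)
        have := hple hv
        simpa using this
    have hvcol : v ∈ Submodule.span F (Set.range (fun j => A.transpose j)) :=
      Submodule.span_mono (Set.image_subset_range _ _) hv
    obtain ⟨c, hc⟩ := (Submodule.mem_span_range_iff_exists_fun F).1 hvcol
    let ψ : (Fin n → F) →ₗ[F] F := ∑ j : Fin n, c j • LinearMap.proj j
    have hψ : ∀ w : Fin n → F, ψ w = ∑ j : Fin n, c j * w j := by
      intro w
      simp [ψ, LinearMap.sum_apply]
    have hrowv : ∀ i : Fin m, ψ (A i) = v i := by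
      intro i
      rw [hψ]
      rw [← hc]
      simp [Matrix.transpose_apply, Finset.sum_apply]
    have hrows : ∀ i : Fin m, ψ (A i) = 0 := by
      intro i
      have hmem : A i ∈ Submodule.span F ((fun i => A i) '' R) := by
        rw [hspan]
        exact Submodule.subset_span ⟨i, rfl⟩
      have hle : Submodule.span F ((fun i => A i) '' R) ≤ LinearMap.ker ψ := by
        rw [Submodule.span_le]
        rintro w ⟨i', hi', rfl⟩
        simp only [SetLike.mem_coe, LinearMap.mem_ker]
        rw [hrowv]
        exact hvR i' hi'
      simpa using hle hmem
    have hv0 : v = 0 := by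
      funext i
      rw [← hrowv i, hrows i]; rfl
    exact Subtype.ext hv0
  have h1 := LinearMap.finrank_range_add_finrank_ker π'
  rw [hker, finrank_bot] at h1
  have h2 : finrank F (LinearMap.range π') ≤ finrank F (↥S' → F) :=
    Submodule.finrank_le _
  have h3 : finrank F (↥S' → F) = S'.ncard := by
    rw [Module.finrank_pi, Set.ncard_eq_toFinset_card', Set.toFinset_card]
  show finrank F p ≤ S'.ncard
  omega

end RankBound
section Glue

open Module Matrix

variable {F : Type} [Field F] {m n : ℕ}

lemma matRk_univ_eq (A : Matrix (Fin m) (Fin n) F) :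
    matRk A Set.univ = finrank F (Submodule.span F (Set.range Aᵀ)) := by
  rw [matRk, vecRk, Set.image_univ]

lemma exists_good_R (A : Matrix (Fin m) (Fin n) F) :
    ∃ R : Finset (Fin m), R.card = matRk A Set.univ ∧
      Submodule.span F ((fun i => A i) '' ↑R)
        = Submodule.span F (Set.range (fun i => A i)) := by
  classical
  obtain ⟨b, hb_sub, hb_span, hb_li⟩ :=
    exists_linearIndependent F (Set.range (fun i : Fin m => A i))
  have hb_fin : b.Finite := (Set.finite_range _).subset hb_sub
  haveI : Fintype ↥b := hb_fin.fintype
  have hgex : ∀ w : ↥b, ∃ i : Fin m, A i = w.val := fun w => hb_sub w.2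
  choose g hg using hgex
  have hg_inj : Function.Injective g := by
    intro w w' hww
    apply Subtype.ext
    rw [← hg w, ← hg w', hww]
  refine ⟨(Set.toFinite (Set.range g)).toFinset, ?_, ?_⟩
  · rw [← Set.ncard_eq_toFinset_card (Set.range g) (Set.toFinite _),
      ← Nat.card_coe_set_eq, Nat.card_range_of_injective hg_inj,
      Nat.card_eq_fintype_card, ← Set.toFinset_card]
    rw [show b.toFinset.card = finrank F (Submodule.span F b) from
      (finrank_span_set_eq_card hb_li).symm, hb_span]
    rw [matRk_univ_eq, show Set.range Aᵀ = Set.range A.col from rfl,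
      ← Matrix.rank_eq_finrank_span_cols]
    have hrr : (Set.range fun i : Fin m => A i) = Set.range A.row := rfl
    rw [hrr, ← Matrix.rank_eq_finrank_span_row]
  · have himg : (fun i => A i) '' ↑(Set.toFinite (Set.range g)).toFinset = b := by
      rw [Set.Finite.coe_toFinset, ← Set.range_comp]
      have heq : (fun i => A i) ∘ g = fun w : ↥b => w.val := funext hg
      rw [heq, Subtype.range_coe]
    rw [himg, hb_span]

/-- The path forest: every graph on `Fin m` is contained in its closure. -/
def pathForest (m : ℕ) : RForest (Fin m) where
  parent := fun i => if h : i.val = 0 then i else ⟨i.val - 1, by omega⟩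
  reach := by
    have key : ∀ k : ℕ, ∀ i : Fin m,
        ((fun i : Fin m => if h : i.val = 0 then i else ⟨i.val - 1, by omega⟩)^[k] i).val
          ≤ i.val - k := by
      intro k
      induction k with
      | zero => simp
      | succ k ih =>
        intro i
        rw [Function.iterate_succ_apply]
        by_cases h : i.val = 0
        · rw [dif_pos h]
          have := ih i
          omega
        · rw [dif_neg h]
          have := ih ⟨i.val - 1, by omega⟩
          simp only at this
          omega
    intro v
    refine ⟨v.val, ?_⟩
    have h0 : ((fun i : Fin m => if h : i.val = 0 then i
        else ⟨i.val - 1, by omega⟩)^[v.val] v).val = 0 := by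
      have := key v.val v
      omega
    exact dif_pos h0

lemma pathForest_iterate (m : ℕ) (i : Fin m) (k : ℕ) :
    ((pathForest m).parent^[k] i).val = i.val - k := by
  induction k with
  | zero => simp
  | succ k ih =>
    rw [Function.iterate_succ_apply']
    show (if h : ((pathForest m).parent^[k] i).val = 0 then (pathForest m).parent^[k] i
      else (⟨((pathForest m).parent^[k] i).val - 1, by omega⟩ : Fin m)).val = i.val - (k + 1)
    by_cases h : ((pathForest m).parent^[k] i).val = 0
    · rw [dif_pos h]
      omega
    · rw [dif_neg h]
      show ((pathForest m).parent^[k] i).val - 1 = i.val - (k + 1)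
      omega

lemma pathForest_closure (G : SimpleGraph (Fin m)) :
    (pathForest m).ClosureContains G := by
  intro u v _
  rcases le_total u.val v.val with h | h
  · left
    refine ⟨v.val - u.val, ?_⟩
    apply Fin.ext
    rw [pathForest_iterate]
    omega
  · right
    refine ⟨u.val - v.val, ?_⟩
    apply Fin.ext
    rw [pathForest_iterate]
    omega

open Classical in
/-- The deepest row of `R` in the support of column `j`, if any. -/
noncomputable def deepRow (Fo : RForest (Fin m)) (R : Finset (Fin m))
    (A : Matrix (Fin m) (Fin n) F) (j : Fin n) : Option {x // x ∈ R} :=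
  if h : {i : {x // x ∈ R} | A i.val j ≠ 0}.Nonempty then
    some (Set.Finite.exists_maximalFor (fun i : {x // x ∈ R} => Fo.depthV i.val) _
      (Set.toFinite _) h).choose
  else none

/-- The leaf of the built tree to which column `j` is assigned. -/
noncomputable def colLeaf (Fo : RForest (Fin m)) (R : Finset (Fin m))
    (A : Matrix (Fin m) (Fin n) F) (j : Fin n) : Option {x // x ∈ R} :=
  (Fo.toRTree R).leafDesc (deepRow Fo R A j)

lemma colLeaf_isLeaf (Fo : RForest (Fin m)) (R : Finset (Fin m))
    (A : Matrix (Fin m) (Fin n) F) (j : Fin n) :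
    (Fo.toRTree R).IsLeaf (colLeaf Fo R A j) :=
  (Fo.toRTree R).leafDesc_isLeaf _

lemma colLeaf_path (Fo : RForest (Fin m)) (R : Finset (Fin m))
    (A : Matrix (Fin m) (Fin n) F) (hcl : Fo.ClosureContains (dualGraph A))
    (j : Fin n) {i : Fin m} (hi : i ∈ R) (hA : A i j ≠ 0) :
    (some ⟨i, hi⟩ : Option {x // x ∈ R}) ∈ (Fo.toRTree R).pathEdges (colLeaf Fo R A j) := by
  have hne : {i' : {x // x ∈ R} | A i'.val j ≠ 0}.Nonempty := ⟨⟨i, hi⟩, hA⟩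
  have hdeep : deepRow Fo R A j = some (Set.Finite.exists_maximalFor
      (fun i : {x // x ∈ R} => Fo.depthV i.val) _ (Set.toFinite _) hne).choose := by
    rw [deepRow, dif_pos hne]
  set dj := (Set.Finite.exists_maximalFor
      (fun i : {x // x ∈ R} => Fo.depthV i.val) _ (Set.toFinite _) hne).choose with hdj
  have hdj_mem : dj ∈ {i' : {x // x ∈ R} | A i'.val j ≠ 0} :=
    (Set.Finite.exists_maximalFor
      (fun i : {x // x ∈ R} => Fo.depthV i.val) _ (Set.toFinite _) hne).choose_spec.1
  have hdj_max : ∀ b ∈ {i' : {x // x ∈ R} | A i'.val j ≠ 0},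
      Fo.depthV dj.val ≤ Fo.depthV b.val → Fo.depthV dj.val = Fo.depthV b.val :=
    fun b hb hle => le_antisymm hle ((Set.Finite.exists_maximalFor
      (fun i : {x // x ∈ R} => Fo.depthV i.val) _ (Set.toFinite _) hne).choose_spec.2 hb hle)
  have hanc : Fo.Anc i dj.val := by
    rcases eq_or_ne i dj.val with heq | hne'
    · exact heq ▸ Fo.anc_refl i
    · have hadj : (dualGraph A).Adj i dj.val := ⟨hne', j, hA, hdj_mem⟩
      rcases hcl i dj.val hadj with h | h
      · exact h
      · exfalso
        have hlt : Fo.depthV dj.val < Fo.depthV i :=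
          Fo.depthV_lt_of_anc h (Ne.symm hne')
        have h2 : Fo.depthV dj.val = Fo.depthV i :=
          hdj_max ⟨i, hi⟩ hA (le_of_lt hlt)
        omega
  have hancT : (Fo.toRTree R).AncT (some ⟨i, hi⟩) (some dj) :=
    Fo.toRTree_anc R hi dj.2 hanc
  have hleaf : (Fo.toRTree R).AncT (some dj) (colLeaf Fo R A j) := by
    show (Fo.toRTree R).AncT (some dj) ((Fo.toRTree R).leafDesc (deepRow Fo R A j))
    rw [hdeep]
    exact (Fo.toRTree R).leafDesc_anc _
  exact (Fo.toRTree R).mem_pathEdges_of_anc (by simp [RForest.toRTree_root])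
    ((Fo.toRTree R).ancT_trans hancT hleaf)

end Glue
/-- Proposition: `bd(A) ≤ td_D(A)`. The branch-depth of an `m × n`
matrix over a field is at most its dual tree-depth. -/
theorem branchDepth_le_dual_treeDepth (F : Type) [Field F] (m n : ℕ)
    (A : Matrix (Fin m) (Fin n) F) :
    matBranchDepth A ≤ treeDepth (dualGraph A) := by
  classical
  rw [treeDepth]
  apply le_csInf
  · exact ⟨(pathForest m).height, pathForest m, pathForest_closure _, rfl⟩
  rintro b ⟨Fo, hcl, rfl⟩
  obtain ⟨R, hcard, hspan⟩ := exists_good_R A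
  set T := Fo.toRTree R with hT
  set f : Fin n → Option {x // x ∈ R} := colLeaf Fo R A with hf
  have hdecomp : IsDepthDecompOn (matRk A) (matRk A Set.univ) T f := by
    refine ⟨fun x => colLeaf_isLeaf Fo R A x, ?_, ?_⟩
    · show Fintype.card (Option {x // x ∈ R}) - 1 = matRk A Set.univ
      rw [Fintype.card_option, Fintype.card_coe]
      omega
    · intro X'
      set U := ⋃ x ∈ X', T.pathEdges (f x) with hU
      set S' : Set (Fin m) :=
        {i : Fin m | ∃ hi : i ∈ R, (some ⟨i, hi⟩ : Option {x // x ∈ R}) ∈ U} with hS'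
      have hsupp : ∀ j ∈ X', ∀ i ∈ (↑R : Set (Fin m)), A i j ≠ 0 → i ∈ S' := by
        intro j hj i hi hA
        exact ⟨hi, Set.mem_biUnion hj (colLeaf_path Fo R A hcl j hi hA)⟩
      have h1 : matRk A X' ≤ S'.ncard := rank_bound A ↑R S' hspan X' hsupp
      have h2 : S'.ncard ≤ U.ncard := by
        apply Set.ncard_le_ncard_of_injOn
          (fun i => if h : i ∈ R then (some ⟨i, h⟩ : Option {x // x ∈ R}) else none)
        · rintro a ⟨ha, haU⟩
          simpa only [dif_pos ha] using haU
        · rintro a ⟨ha, -⟩ a' ⟨ha', -⟩ hEq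
          simp only [dif_pos ha, dif_pos ha', Option.some_inj, Subtype.mk.injEq] at hEq
          exact hEq
      exact le_trans h1 h2
  calc matBranchDepth A ≤ T.depth := branchDepth_le_of_decomp _ _ T f hdecomp
    _ ≤ Fo.height := Fo.toRTree_depth_le R
end Relabel
end

section
/- Let (T, f) be a depth-decomposition of a vector matroid M = (X, I) of rank r, and let S be a primary branch of T whose root is the root of T. Then the rank of Ŝ equals ‖S‖, i.e., S is at capacity. Consequently, if T has a primary branch that is not at capacity, then the root of that branch is not the root of T (and the root of T has a single child). -/
section Aux

variable {V : Type} [Fintype V] [DecidableEq V]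

lemma iterate_parent_root (T : RTree V) (n : ℕ) : T.parent^[n] T.root = T.root :=
  Function.iterate_fixed T.parent_root n

lemma desc_subset_nonroot (T : RTree V) {u' : V} (h : u' ≠ T.root) :
    T.desc u' ⊆ {w : V | w ≠ T.root} := by
  rintro w ⟨n, hn⟩ hw
  subst hw
  exact h (by rw [iterate_parent_root] at hn; exact hn.symm)

lemma pathEdges_subset_desc (T : RTree V) {u' x : V} (hroot : T.parent u' = T.root)
    (hx : x ∈ T.desc u') : T.pathEdges x ⊆ T.desc u' := by
  obtain ⟨m, hm⟩ := hx
  rintro u ⟨hu, n, hn⟩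
  by_cases hnm : n ≤ m
  · exact ⟨m - n, by rw [← hn, ← Function.iterate_add_apply, Nat.sub_add_cancel hnm, hm]⟩
  · exfalso
    apply hu
    have h1 : u = T.parent^[n - m] u' := by
      rw [← hm, ← Function.iterate_add_apply, Nat.sub_add_cancel (le_of_lt (not_le.mp hnm)),
        hn]
    have h2 : 1 ≤ n - m := by omega
    rw [h1, show n - m = (n - m - 1) + 1 by omega, Function.iterate_add_apply,
      Function.iterate_one, hroot, iterate_parent_root]

lemma pathEdges_disjoint_desc (T : RTree V) {u' x : V} (hx : x ∉ T.desc u') :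
    T.pathEdges x ⊆ {w : V | w ≠ T.root} \ T.desc u' := by
  rintro u ⟨hu, n, hn⟩
  refine ⟨hu, fun ⟨k, hk⟩ => hx ⟨k + n, ?_⟩⟩
  rw [Function.iterate_add_apply, hn, hk]

lemma vecRk_union_le (F : Type) {W ι : Type} [Field F] [AddCommGroup W] [Module F W]
    [Fintype ι] (v : ι → W) (A B : Set ι) :
    vecRk F v (A ∪ B) ≤ vecRk F v A + vecRk F v B := by
  unfold vecRk
  rw [Set.image_union, Submodule.span_union]
  haveI : FiniteDimensional F (Submodule.span F (v '' A)) :=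
    FiniteDimensional.span_of_finite F ((Set.toFinite A).image v)
  haveI : FiniteDimensional F (Submodule.span F (v '' B)) :=
    FiniteDimensional.span_of_finite F ((Set.toFinite B).image v)
  have := Submodule.finrank_sup_add_finrank_inf_eq
    (Submodule.span F (v '' A)) (Submodule.span F (v '' B))
  omega

lemma nonroot_ncard (T : RTree V) : {w : V | w ≠ T.root}.ncard = Fintype.card V - 1 := by
  have : {w : V | w ≠ T.root} = Set.univ \ {T.root} := by ext w; simp
  rw [this, Set.ncard_diff (by simp), Set.ncard_univ, Set.ncard_singleton,
    Nat.card_eq_fintype_card]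

lemma depthV_root (T : RTree V) : T.depthV T.root = 0 := by
  unfold RTree.depthV
  exact Nat.sInf_eq_zero.mpr (Or.inl (by simp))

end Aux

/-- primary branches rooted at the root are at capacity. Let `(T, f)`
be a depth-decomposition of a vector matroid of rank `r` and let `S` be a primary branch
of `T` whose root is the root of `T`.  Then the rank of `Ŝ` equals `‖S‖`, i.e. `S` is at
capacity.  Consequently, if `T` has a primary branch that is not at capacity, then the
root of that branch is not the root of `T` and the root of `T` has a single child. -/
theorem primary_branch_at_root_atCapacity (F W ι : Type) [Field F] [AddCommGroup W]
    [Module F W] [Fintype ι] (v : ι → W) {V : Type} [Fintype V] [DecidableEq V]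
    (T : RTree V) (f : ι → V) (r : ℕ) (hr : vecRk F v Set.univ = r)
    (hdd : IsDepthDecompOn (vecRk F v) r T f) :
    (∀ u' : V, T.IsPrimaryBranch u' → T.parent u' = T.root →
      vecRk F v {x | f x ∈ T.desc u'} = (T.desc u').ncard ∧
        AtCapacity (vecRk F v) T f u') ∧
    (∀ u' : V, T.IsPrimaryBranch u' → ¬ AtCapacity (vecRk F v) T f u' →
      T.parent u' ≠ T.root ∧ T.childCount T.root = 1) := by
  obtain ⟨hleaf, hedge, hrk⟩ := hdd
  have main : ∀ u' : V, u' ≠ T.root → T.parent u' = T.root →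
      vecRk F v {x | f x ∈ T.desc u'} = (T.desc u').ncard := by
    intro u' hne hroot
    set D := T.desc u' with hD
    set N := {w : V | w ≠ T.root} with hN
    set A := {x | f x ∈ D} with hA
    have hDN : D ⊆ N := desc_subset_nonroot T hne
    have hNcard : N.ncard = r := by
      rw [nonroot_ncard T]; exact hedge
    have hDcard : D.ncard ≤ r := hNcard ▸ Set.ncard_le_ncard hDN (Set.toFinite N)
    -- upper bound
    have h1 : vecRk F v A ≤ D.ncard := by
      refine le_trans (hrk A) (Set.ncard_le_ncard ?_ (Set.toFinite D))
      intro w hw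
      simp only [Set.mem_iUnion] at hw
      obtain ⟨x, hx, hw⟩ := hw
      exact pathEdges_subset_desc T hroot hx hw
    -- lower bound via complement
    have h3 : vecRk F v Aᶜ ≤ r - D.ncard := by
      refine le_trans (hrk Aᶜ) ?_
      have hsub : (⋃ x ∈ Aᶜ, T.pathEdges (f x)) ⊆ N \ D := by
        intro w hw
        simp only [Set.mem_iUnion] at hw
        obtain ⟨x, hx, hw⟩ := hw
        exact pathEdges_disjoint_desc T hx hw
      calc (⋃ x ∈ Aᶜ, T.pathEdges (f x)).ncard
          ≤ (N \ D).ncard := Set.ncard_le_ncard hsub (Set.toFinite _)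
        _ = N.ncard - D.ncard := Set.ncard_diff hDN
        _ = r - D.ncard := by rw [hNcard]
    have h2 : r ≤ vecRk F v A + vecRk F v Aᶜ := by
      have := vecRk_union_le F v A Aᶜ
      rw [Set.union_compl_self, hr] at this
      exact this
    omega
  constructor
  · intro u' hpb hroot
    have h := main u' hpb.1 hroot
    refine ⟨h, ?_⟩
    unfold AtCapacity
    rw [h, hroot, depthV_root]
    omega
  · intro u' hpb hcap
    have hne : T.parent u' ≠ T.root := by
      intro hroot
      apply hcap
      unfold AtCapacity
      rw [main u' hpb.1 hroot, hroot, depthV_root]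
      omega
    refine ⟨hne, ?_⟩
    apply hpb.2.2
    exact ⟨fun h => hne h.symm, (T.reach (T.parent u'))⟩
end
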